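/- For an integer m ≥ 1, let M be the 3×3 complex matrix with rows (−(m+1), −2m, −1), (1, 1, 0), (m, 2m, 1). Then det(M − λ·I) = −(λ + 1)(λ² + (m − 2)λ + 1) for all λ ∈ ℂ. Consequently, if d ≥ 4 is an integer such that e^{2π√−1/d} is an eigenvalue of M, then (m, d) = (2, 4) or (m, d) = (1, 6). -/

import Mathlib

/-- For the matrix `M` of the autoequivalence `ST_{O_X} ∘ (⊗ O_X(1))` on the algebraic
cohomology of a K3 surface of degree `2m`:
`det(M - λI) = -(λ+1)(λ² + (m-2)λ + 1)`, and if `e^{2π√-1/d}` is an eigenvalue of `M`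
for some `d ≥ 4`, then `(m,d) = (2,4)` or `(1,6)`. -/
theorem stmt_4 (m : ℤ) (hm : 1 ≤ m)
    (M : Matrix (Fin 3) (Fin 3) ℂ)
    (hM : M = !![-((m : ℂ) + 1), -(2 * (m : ℂ)), -1; 1, 1, 0; (m : ℂ), 2 * (m : ℂ), 1]) :
    (∀ z : ℂ, (M - z • (1 : Matrix (Fin 3) (Fin 3) ℂ)).det =
      -(z + 1) * (z ^ 2 + ((m : ℂ) - 2) * z + 1)) ∧
    (∀ d : ℕ, 4 ≤ d →
      (∃ v : Fin 3 → ℂ, v ≠ 0 ∧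
        M.mulVec v = Complex.exp (2 * Real.pi * Complex.I / d) • v) →
      (m = 2 ∧ d = 4) ∨ (m = 1 ∧ d = 6)) := by
  subst hM
  have hdet : ∀ z : ℂ,
      (!![-((m : ℂ) + 1), -(2 * (m : ℂ)), -1; 1, 1, 0; (m : ℂ), 2 * (m : ℂ), 1]
        - z • (1 : Matrix (Fin 3) (Fin 3) ℂ)).det =
      -(z + 1) * (z ^ 2 + ((m : ℂ) - 2) * z + 1) := by
    intro z
    rw [Matrix.det_fin_three]
    simp [Matrix.sub_apply, Matrix.smul_apply, Matrix.one_apply]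
    ring
  refine ⟨hdet, ?_⟩
  intro d hd ⟨v, hv0, hv⟩
  have hdpos : (0 : ℝ) < d := by positivity
  set θ : ℝ := 2 * Real.pi / d with hθ
  have hzdef : 2 * (Real.pi : ℂ) * Complex.I / d = (θ : ℂ) * Complex.I := by
    rw [hθ]
    push_cast
    ring
  set z : ℂ := Complex.exp (2 * Real.pi * Complex.I / d) with hzd
  -- det vanishes at z
  have hker : (!![-((m : ℂ) + 1), -(2 * (m : ℂ)), -1; 1, 1, 0; (m : ℂ), 2 * (m : ℂ), 1]
      - z • (1 : Matrix (Fin 3) (Fin 3) ℂ)).mulVec v = 0 := by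
    rw [Matrix.sub_mulVec, Matrix.smul_mulVec, Matrix.one_mulVec, hv, sub_self]
  have hdet0 : (!![-((m : ℂ) + 1), -(2 * (m : ℂ)), -1; 1, 1, 0; (m : ℂ), 2 * (m : ℂ), 1]
      - z • (1 : Matrix (Fin 3) (Fin 3) ℂ)).det = 0 :=
    Matrix.exists_mulVec_eq_zero_iff.mp ⟨v, hv0, hker⟩
  rw [hdet z] at hdet0
  -- z = exp(θ i)
  have hz : z = Complex.exp ((θ : ℂ) * Complex.I) := by rw [hzd, hzdef]
  have hzabs : ‖z‖ = 1 := by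
    rw [hz, Complex.norm_exp]
    simp
  have hzne : z ≠ 0 := by rw [hz]; exact Complex.exp_ne_zero _
  -- z ≠ -1
  have hθpos : 0 < θ := by positivity
  have hθle : θ ≤ Real.pi / 2 := by
    rw [hθ, div_le_div_iff₀ hdpos (by norm_num)]
    have : (4 : ℝ) ≤ d := by exact_mod_cast hd
    nlinarith [Real.pi_pos]
  have hre : z.re = Real.cos θ := by rw [hz]; exact Complex.exp_ofReal_mul_I_re θ
  have him : z.im = Real.sin θ := by rw [hz]; exact Complex.exp_ofReal_mul_I_im θ
  have hzne1 : z + 1 ≠ 0 := by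
    intro h
    have : z.im = 0 := by
      have := congrArg Complex.im h
      simpa using this
    rw [him] at this
    have := Real.sin_pos_of_pos_of_lt_pi hθpos (by linarith [Real.pi_pos])
    linarith
  have hquad : z ^ 2 + ((m : ℂ) - 2) * z + 1 = 0 := by
    rcases mul_eq_zero.mp hdet0 with h | h
    · exact absurd (neg_eq_zero.mp h) hzne1
    · exact h
  -- divide by z : z + (m-2) + z⁻¹ = 0
  have hconj : z + (starRingEnd ℂ) z + ((m : ℂ) - 2) = 0 := by
    rw [← Complex.inv_eq_conj hzabs]
    field_simp
    linear_combination hquad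
  have hre2 : 2 * Real.cos θ + ((m : ℝ) - 2) = 0 := by
    have := congrArg Complex.re hconj
    rw [Complex.add_conj] at this
    simpa [hre, Complex.cos_ofReal_re] using this
  -- bounds on cos
  have hcos_nonneg : 0 ≤ Real.cos θ :=
    Real.cos_nonneg_of_mem_Icc ⟨by linarith [Real.pi_pos], hθle⟩
  have hcos_lt_one : Real.cos θ < 1 := by
    have := Real.strictAntiOn_cos (Set.mem_Icc.mpr ⟨le_refl 0, Real.pi_pos.le⟩)
      (Set.mem_Icc.mpr ⟨hθpos.le, by linarith [Real.pi_pos]⟩) hθpos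
    simpa using this
  have hm2 : m = 1 ∨ m = 2 := by
    have h1 : (m : ℝ) ≤ 2 := by linarith
    have h2 : (0 : ℝ) < (m : ℝ) := by exact_mod_cast hm
    have : m ≤ 2 := by exact_mod_cast h1
    omega
  have hmemθ : θ ∈ Set.Icc 0 Real.pi := ⟨hθpos.le, by linarith [Real.pi_pos]⟩
  rcases hm2 with h1 | h2
  · -- m = 1 : cos θ = 1/2 = cos (π/3), so θ = π/3, d = 6
    right
    refine ⟨h1, ?_⟩
    have hc : Real.cos θ = Real.cos (Real.pi / 3) := by
      rw [Real.cos_pi_div_three]; rw [h1] at hre2; push_cast at hre2; linarith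
    have hθeq : θ = Real.pi / 3 :=
      Real.injOn_cos hmemθ ⟨by positivity, by linarith [Real.pi_pos]⟩ hc
    have : (d : ℝ) = 6 := by
      rw [hθ] at hθeq
      field_simp at hθeq
      nlinarith [Real.pi_pos]
    exact_mod_cast this
  · -- m = 2 : cos θ = 0 = cos (π/2), so θ = π/2, d = 4
    left
    refine ⟨h2, ?_⟩
    have hc : Real.cos θ = Real.cos (Real.pi / 2) := by
      rw [Real.cos_pi_div_two]; rw [h2] at hre2; push_cast at hre2; linarith
    have hθeq : θ = Real.pi / 2 :=
      Real.injOn_cos hmemθ ⟨by positivity, by linarith [Real.pi_pos]⟩ hc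
    have : (d : ℝ) = 4 := by
      rw [hθ] at hθeq
      field_simp at hθeq
      nlinarith [Real.pi_pos]
    exact_mod_cast this
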